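/- Let a have order 2^r with r ≥ 3 in an abelian group, and let q ≡ 3 (mod 8). Then the set of generators of ⟨a⟩ splits into exactly two classes under the relation b ~ a^(q^j), i.e., the Q-class of a splits into exactly two q-classes. -/

import Mathlib

-- powers of q mod 8
private lemma pow_mod8 {q : ℕ} (hq : q % 8 = 3) (i : ℕ) : q ^ i % 8 = 1 ∨ q ^ i % 8 = 3 := by
  induction i with
  | zero => left; rfl
  | succ n ih =>
    rw [pow_succ, Nat.mul_mod, hq]
    rcases ih with h | h <;> rw [h] <;> simp

private lemma key_sq {q : ℕ} (hq : q % 8 = 3) :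
    ∀ j : ℕ, ∃ t : ℕ, t % 2 = 1 ∧ q ^ 2 ^ (j + 1) = 1 + 2 ^ (j + 3) * t := by
  intro j
  induction j with
  | zero =>
    obtain ⟨m, hm⟩ : ∃ m, q = 8 * m + 3 := ⟨q / 8, by omega⟩
    exact ⟨8 * m ^ 2 + 6 * m + 1, by omega, by subst hm; ring⟩
  | succ n ih =>
    obtain ⟨t, ht, h⟩ := ih
    refine ⟨t + 2 ^ (n + 2) * t ^ 2, ?_, ?_⟩
    · have h2 : 2 ^ (n + 2) * t ^ 2 % 2 = 0 := by
        have : (2:ℕ) ∣ 2 ^ (n + 2) * t ^ 2 :=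
          Dvd.dvd.mul_right (dvd_pow_self 2 (by omega)) _
        omega
      omega
    · have hpow : q ^ 2 ^ (n + 2) = (q ^ 2 ^ (n + 1)) ^ 2 := by
        rw [← pow_mul]; ring_nf
      rw [hpow, h]; ring

private lemma qpow_one {q r : ℕ} (hq : q % 8 = 3) (hr : 3 ≤ r) :
    q ^ 2 ^ (r - 2) ≡ 1 [MOD 2 ^ r] := by
  obtain ⟨t, ht, h⟩ := key_sq hq (r - 3)
  have h1 : r - 3 + 1 = r - 2 := by omega
  have h2 : r - 3 + 3 = r := by omega
  rw [h1, h2] at h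
  rw [h]
  show (1 + 2 ^ r * t) % 2 ^ r = 1 % 2 ^ r
  exact Nat.add_mul_mod_self_left 1 (2 ^ r) t

private lemma qpow_not_one {q r : ℕ} (hq : q % 8 = 3) (hr : 3 ≤ r) :
    ¬ q ^ 2 ^ (r - 3) ≡ 1 [MOD 2 ^ r] := by
  rcases Nat.lt_or_ge r 4 with h4 | h4
  · have : r = 3 := by omega
    subst this
    simp only [show (3:ℕ) - 3 = 0 from rfl, pow_zero, pow_one]
    intro hc
    have : q % 8 = 1 % 8 := hc
    omega
  · obtain ⟨t, ht, h⟩ := key_sq hq (r - 4)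
    have h1 : r - 4 + 1 = r - 3 := by omega
    have h2 : r - 4 + 3 = r - 1 := by omega
    rw [h1, h2] at h
    rw [h]
    intro hc
    have hdvd : 2 ^ r ∣ 1 + 2 ^ (r - 1) * t - 1 :=
      (Nat.modEq_iff_dvd' (by omega)).mp hc.symm
    have hdvd' : 2 ^ r ∣ 2 ^ (r - 1) * t := by simpa using hdvd
    obtain ⟨c, hc2⟩ := hdvd'
    have hre : 2 ^ r = 2 ^ (r - 1) * 2 := by
      rw [← pow_succ]; congr 1; omega
    rw [hre, mul_assoc] at hc2
    have : t = 2 * c := Nat.eq_of_mul_eq_mul_left (Nat.two_pow_pos _) hc2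
    omega

private lemma qpow_not_neg_one {q r : ℕ} (hq : q % 8 = 3) (hr : 3 ≤ r) (i : ℕ) :
    ¬ q ^ i ≡ 2 ^ r - 1 [MOD 2 ^ r] := by
  intro hc
  have h8 : (8:ℕ) ∣ 2 ^ r := by
    have : (2:ℕ) ^ 3 ∣ 2 ^ r := pow_dvd_pow 2 hr
    simpa using this
  have hc8 : q ^ i ≡ 2 ^ r - 1 [MOD 8] := hc.of_dvd h8
  have h1 : (2:ℕ) ^ r - 1 ≡ 7 [MOD 8] := by
    obtain ⟨k, hk⟩ := h8
    have hk1 : 1 ≤ k := by nlinarith [Nat.two_pow_pos r]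
    show (2 ^ r - 1) % 8 = 7 % 8
    omega
  have : q ^ i % 8 = 7 % 8 := hc8.trans h1
  rcases pow_mod8 hq i with h | h <;> omega

private lemma odd_rep {q r : ℕ} (hq : q % 8 = 3) (hr : 3 ≤ r) {v : ℕ} (hv : Odd v) :
    (∃ i, v ≡ q ^ i [MOD 2 ^ r]) ∨ ∃ i, v ≡ (2 ^ r - 1) * q ^ i [MOD 2 ^ r] := by
  haveI : NeZero (2 ^ r) := ⟨(Nat.two_pow_pos r).ne'⟩
  have hqodd : q % 2 = 1 := by omega
  have hcop : Nat.Coprime q (2 ^ r) := by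
    refine Nat.Coprime.pow_right r ?_
    rw [Nat.coprime_two_right, Nat.odd_iff]; exact hqodd
  set qu : (ZMod (2 ^ r))ˣ := ZMod.unitOfCoprime q hcop with hqu
  have hcoe : (qu : ZMod (2 ^ r)) = (q : ZMod (2 ^ r)) := ZMod.coe_unitOfCoprime q hcop
  -- cast lemma for 2^r - 1
  have hneg1 : ((2 ^ r - 1 : ℕ) : ZMod (2 ^ r)) = -1 := by
    have h1 : (1:ℕ) ≤ 2 ^ r := Nat.one_le_two_pow
    rw [Nat.cast_sub h1, ZMod.natCast_self]
    simp
  -- qu ^ k = 1 iff nat congruence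
  have hpow_coe : ∀ k : ℕ, ((qu ^ k : (ZMod (2 ^ r))ˣ) : ZMod (2 ^ r)) = ((q ^ k : ℕ) : ZMod (2 ^ r)) := by
    intro k; push_cast [hcoe]; ring
  have hq1 : qu ^ 2 ^ (r - 2) = 1 := by
    ext
    rw [hpow_coe]
    have := (ZMod.natCast_eq_natCast_iff _ _ _).mpr (qpow_one hq hr)
    simpa using this
  have hqn1 : qu ^ 2 ^ (r - 3) ≠ 1 := by
    intro hc
    apply qpow_not_one hq hr (r := r)
    have : ((q ^ 2 ^ (r - 3) : ℕ) : ZMod (2 ^ r)) = ((1 : ℕ) : ZMod (2 ^ r)) := by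
      rw [← hpow_coe, hc]; simp
    exact (ZMod.natCast_eq_natCast_iff _ _ _).mp this
  have hneg : ∀ i : ℕ, qu ^ i ≠ -1 := by
    intro i hc
    apply qpow_not_neg_one hq hr (r := r) i
    have : ((q ^ i : ℕ) : ZMod (2 ^ r)) = ((2 ^ r - 1 : ℕ) : ZMod (2 ^ r)) := by
      rw [← hpow_coe, hneg1, hc]; simp
    exact (ZMod.natCast_eq_natCast_iff _ _ _).mp this
  -- the order of qu is 2 ^ (r - 2)
  have horder : orderOf qu = 2 ^ (r - 2) := by
    have hdvd : orderOf qu ∣ 2 ^ (r - 2) := orderOf_dvd_of_pow_eq_one hq1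
    obtain ⟨s, hs, hso⟩ := (Nat.dvd_prime_pow Nat.prime_two).mp hdvd
    rcases Nat.lt_or_ge s (r - 2) with hlt | hge
    · exfalso
      apply hqn1
      apply orderOf_dvd_iff_pow_eq_one.mp
      rw [hso]
      exact pow_dvd_pow 2 (by omega)
    · rw [hso]; congr 1; omega
  -- counting: the map (i, j) ↦ qu ^ i * (-1) ^ j is bijective
  have hcard : Fintype.card (ZMod (2 ^ r))ˣ = 2 ^ (r - 1) := by
    rw [ZMod.card_units_eq_totient, Nat.totient_prime_pow Nat.prime_two (by omega)]
    norm_num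
  set f : Fin (2 ^ (r - 2)) × Fin 2 → (ZMod (2 ^ r))ˣ :=
    fun p => qu ^ (p.1 : ℕ) * (-1) ^ (p.2 : ℕ) with hf
  have hinj : Function.Injective f := by
    rintro ⟨i1, j1⟩ ⟨i2, j2⟩ hfe
    simp only [hf] at hfe
    have hcancel : ∀ i1 i2 : Fin (2 ^ (r - 2)), (qu ^ (i1:ℕ) = qu ^ (i2:ℕ)) → i1 = i2 := by
      intro i1 i2 h
      have := pow_injOn_Iio_orderOf (x := qu) (by rw [horder]; exact i1.2) (by rw [horder]; exact i2.2) h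
      exact Fin.ext this
    have hmix : ∀ i1 i2 : Fin (2 ^ (r - 2)), qu ^ (i1:ℕ) ≠ qu ^ (i2:ℕ) * (-1) := by
      intro i1 i2 h
      apply hneg ((i1:ℕ) + (2 ^ (r - 2) - (i2:ℕ)))
      have h2 : (i2:ℕ) + (2 ^ (r - 2) - (i2:ℕ)) = 2 ^ (r - 2) := by
        have := i2.2; omega
      calc qu ^ ((i1:ℕ) + (2 ^ (r - 2) - (i2:ℕ)))
          = qu ^ (i1:ℕ) * qu ^ (2 ^ (r - 2) - (i2:ℕ)) := by rw [pow_add]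
        _ = qu ^ (i2:ℕ) * (-1) * qu ^ (2 ^ (r - 2) - (i2:ℕ)) := by rw [h]
        _ = qu ^ ((i2:ℕ) + (2 ^ (r - 2) - (i2:ℕ))) * (-1) := by rw [pow_add, mul_right_comm]
        _ = -1 := by rw [h2, hq1, one_mul]
    fin_cases j1 <;> fin_cases j2 <;> simp only [Fin.isValue, Fin.val_zero, Fin.val_one, pow_zero, pow_one, mul_one] at hfe
    · rw [hcancel _ _ hfe]
    · exact absurd hfe (hmix _ _)
    · exact absurd hfe.symm (hmix _ _)
    · have : qu ^ (i1:ℕ) = qu ^ (i2:ℕ) := by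
        have := mul_right_cancel hfe
        exact this
      rw [hcancel _ _ this]
  have hsurj : Function.Surjective f := by
    have hceq : Fintype.card (Fin (2 ^ (r - 2)) × Fin 2) = Fintype.card (ZMod (2 ^ r))ˣ := by
      simp only [Fintype.card_prod, Fintype.card_fin, hcard, ← pow_succ]
      congr 1
      omega
    exact ((Fintype.bijective_iff_injective_and_card f).mpr ⟨hinj, hceq⟩).2
  -- apply to v
  have hvcop : Nat.Coprime v (2 ^ r) := by
    refine Nat.Coprime.pow_right r ?_
    rw [Nat.coprime_two_right]; exact hv
  obtain ⟨⟨i, j⟩, hij⟩ := hsurj (ZMod.unitOfCoprime v hvcop)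
  have hvcoe : ((v : ℕ) : ZMod (2 ^ r)) = (q : ZMod (2 ^ r)) ^ (i:ℕ) * (-1) ^ (j:ℕ) := by
    rw [← ZMod.coe_unitOfCoprime v hvcop, ← hij]
    simp only [hf]
    push_cast [hcoe]
    ring
  fin_cases j
  · left
    refine ⟨(i:ℕ), (ZMod.natCast_eq_natCast_iff _ _ _).mp ?_⟩
    rw [hvcoe]; push_cast; simp
  · right
    refine ⟨(i:ℕ), (ZMod.natCast_eq_natCast_iff _ _ _).mp ?_⟩
    rw [hvcoe]
    push_cast [hneg1]
    ring

private lemma orbit_congr {G : Type*} [CommGroup G] {r : ℕ} (hr : 3 ≤ r) (a : G)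
    (ha : orderOf a = 2 ^ r) {q : ℕ} (hq : q % 8 = 3) {v w i : ℕ}
    (hvw : v ≡ w * q ^ i [MOD 2 ^ r]) :
    {b : G | ∃ j : ℕ, b = (a ^ v) ^ q ^ j} = {b : G | ∃ j : ℕ, b = (a ^ w) ^ q ^ j} := by
  have hapow : ∀ m n : ℕ, (a ^ m = a ^ n) ↔ m ≡ n [MOD 2 ^ r] := by
    intro m n; rw [pow_eq_pow_iff_modEq, ha]
  have hq1 : q ^ 2 ^ (r - 2) ≡ 1 [MOD 2 ^ r] := qpow_one hq hr
  ext b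
  simp only [Set.mem_setOf_eq, ← pow_mul]
  constructor
  · rintro ⟨j, rfl⟩
    refine ⟨i + j, ?_⟩
    rw [hapow]
    calc v * q ^ j ≡ (w * q ^ i) * q ^ j [MOD 2 ^ r] := hvw.mul_right _
      _ = w * q ^ (i + j) := by rw [pow_add]; ring
  · rintro ⟨j, rfl⟩
    refine ⟨j + (2 ^ (r - 2) - 1) * i, ?_⟩
    rw [hapow]
    symm
    have hkey : i + (j + (2 ^ (r - 2) - 1) * i) = j + 2 ^ (r - 2) * i := by
      have : 1 ≤ 2 ^ (r - 2) := Nat.one_le_two_pow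
      obtain ⟨k, hk⟩ := Nat.exists_eq_add_of_le this
      rw [hk, Nat.add_sub_cancel_left]
      ring
    calc v * q ^ (j + (2 ^ (r - 2) - 1) * i)
        ≡ (w * q ^ i) * q ^ (j + (2 ^ (r - 2) - 1) * i) [MOD 2 ^ r] := hvw.mul_right _
      _ = w * q ^ (i + (j + (2 ^ (r - 2) - 1) * i)) := by rw [mul_assoc, ← pow_add]
      _ = w * q ^ (j + 2 ^ (r - 2) * i) := by rw [hkey]
      _ = w * q ^ j * (q ^ 2 ^ (r - 2)) ^ i := by rw [pow_add, ← pow_mul, mul_assoc]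
      _ ≡ w * q ^ j * 1 ^ i [MOD 2 ^ r] := Nat.ModEq.mul_left _ (hq1.pow i)
      _ = w * q ^ j := by ring

/-- Let `a` have order `2^r` with `r ≥ 3` in an abelian group and let `q ≡ 3 (mod 8)`.
Then the set of generators of `⟨a⟩` (the ℚ-class of `a`, i.e. the odd powers of `a`)
splits into exactly two classes under the `q`-th power maps. -/
theorem rat_class_splits_into_two {G : Type*} [CommGroup G] (r : ℕ) (hr : 3 ≤ r)
    (a : G) (ha : orderOf a = 2 ^ r) (q : ℕ) (hq : q % 8 = 3) :
    Set.ncard {S : Set G | ∃ v : ℕ, Odd v ∧ S = {b | ∃ j : ℕ, b = (a ^ v) ^ q ^ j}} = 2 := by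
  have hset : {S : Set G | ∃ v : ℕ, Odd v ∧ S = {b | ∃ j : ℕ, b = (a ^ v) ^ q ^ j}} =
      {{b : G | ∃ j : ℕ, b = (a ^ 1) ^ q ^ j}, {b : G | ∃ j : ℕ, b = (a ^ (2 ^ r - 1)) ^ q ^ j}} := by
    ext S
    simp only [Set.mem_setOf_eq, Set.mem_insert_iff, Set.mem_singleton_iff]
    constructor
    · rintro ⟨v, hv, rfl⟩
      rcases odd_rep hq hr hv with ⟨i, hi⟩ | ⟨i, hi⟩
      · left
        exact orbit_congr hr a ha hq (by simpa using hi)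
      · right
        exact orbit_congr hr a ha hq hi
    · rintro (rfl | rfl)
      · exact ⟨1, odd_one, rfl⟩
      · refine ⟨2 ^ r - 1, ?_, rfl⟩
        have h8 : (8:ℕ) ∣ 2 ^ r := by simpa using (pow_dvd_pow 2 hr : (2:ℕ) ^ 3 ∣ 2 ^ r)
        have hpos := Nat.two_pow_pos r
        rw [Nat.odd_iff]; omega
  rw [hset]
  apply Set.ncard_pair
  intro hcontra
  have hmem : a ^ (2 ^ r - 1) ∈ {b : G | ∃ j : ℕ, b = (a ^ (2 ^ r - 1)) ^ q ^ j} :=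
    ⟨0, by simp⟩
  rw [← hcontra] at hmem
  obtain ⟨j, hj⟩ := hmem
  rw [pow_one] at hj
  have hmod : 2 ^ r - 1 ≡ q ^ j [MOD 2 ^ r] := by
    have := pow_eq_pow_iff_modEq.mp hj
    rwa [ha] at this
  exact qpow_not_neg_one hq hr j hmod.symm
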